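/- Let C be a nonempty code of length n over a finite alphabet Q of size q ≥ 2 such that any two distinct codewords are at Hamming distance at least d, and suppose C is r-locally recoverable. Then for every positive integer t with t·(r+1) ≤ n and q^(t·r) ≤ |C|, there exists a code C' of length n − t·(r+1) over Q such that any two distinct codewords of C' are at Hamming distance at least d, and |C'| · q^(t·r) ≥ |C|. (This is the cardinality form of the bound k ≤ min over t of [t·r + k_opt^(q)(n − t(r+1), d)].) -/

import Mathlib

set_option maxHeartbeats 1000000

section Aux

variable {n : ℕ} {Q : Type} [DecidableEq Q]

/-- restriction of a word to a set of coordinates, padded with `d0`. -/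
def resW (d0 : Q) (S : Finset (Fin n)) (X : Fin n → Q) : Fin n → Q :=
  fun j => if j ∈ S then X j else d0

lemma resW_resW (d0 : Q) {S S' : Finset (Fin n)} (h : S ⊆ S') (X : Fin n → Q) :
    resW d0 S (resW d0 S' X) = resW d0 S X := by
  funext j
  by_cases hj : j ∈ S
  · simp [resW, hj, h hj]
  · simp [resW, hj]

end Aux

/-- Locality-aware puncturing bound (cardinality form):
any `r`-locally recoverable code `C` of length `n`, minimum distance `d`, over an
alphabet of size `q ≥ 2`, yields for each admissible `t` a code `C'` of length
`n - t (r+1)`, still of minimum distance `d`, with `|C'| · q^{tr} ≥ |C|`. -/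
theorem stmt_0 (n q d r : ℕ) (hq : 2 ≤ q)
    (Q : Type) [Fintype Q] [DecidableEq Q] (hcard : Fintype.card Q = q)
    (C : Finset (Fin n → Q)) (hC : C.Nonempty)
    (hdist : ∀ X ∈ C, ∀ Y ∈ C, X ≠ Y → d ≤ hammingDist X Y)
    (hloc : ∀ i : Fin n, ∃ R : Finset (Fin n), i ∉ R ∧ R.card = r ∧
      ∀ X ∈ C, ∀ Y ∈ C, X i ≠ Y i → ∃ j ∈ R, X j ≠ Y j)
    (t : ℕ) (ht : 0 < t) (htn : t * (r + 1) ≤ n) (htC : q ^ (t * r) ≤ C.card) :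
    ∃ C' : Finset (Fin (n - t * (r + 1)) → Q), C'.Nonempty ∧
      (∀ X ∈ C', ∀ Y ∈ C', X ≠ Y → d ≤ hammingDist X Y) ∧
      C.card ≤ C'.card * q ^ (t * r) := by
  have hQpos : 0 < Fintype.card Q := by omega
  have hQne : Nonempty Q := Fintype.card_pos_iff.mp hQpos
  obtain ⟨d0⟩ := hQne
  -- main induction: a set S of k(r+1) coordinates on which C has at most q^(kr) projections
  have key : ∀ k : ℕ, k * (r + 1) ≤ n → ∃ S : Finset (Fin n),
      S.card = k * (r + 1) ∧ (C.image (resW d0 S)).card ≤ q ^ (k * r) := by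
    intro k
    induction k with
    | zero =>
      intro _
      refine ⟨∅, by simp, ?_⟩
      have hsub : C.image (resW d0 ∅) ⊆ {fun _ => d0} := by
        intro g hg
        obtain ⟨X, _, hX⟩ := Finset.mem_image.mp hg
        simp only [Finset.mem_singleton, ← hX]
        funext j; simp [resW]
      calc (C.image (resW d0 ∅)).card ≤ ({fun _ => d0} : Finset (Fin n → Q)).card :=
            Finset.card_le_card hsub
        _ ≤ q ^ (0 * r) := by simp
    | succ k ih =>
      intro hk1
      have hkn : k * (r + 1) ≤ n := le_trans (by nlinarith) hk1
      obtain ⟨S, hScard, hSim⟩ := ih hkn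
      -- pick a fresh coordinate i
      have hSc : (Sᶜ : Finset (Fin n)).Nonempty := by
        apply Finset.card_pos.mp
        rw [Finset.card_compl, Fintype.card_fin, hScard]
        have h2 : k * (r + 1) + (r + 1) ≤ n := by nlinarith
        omega
      obtain ⟨i, hi⟩ := hSc
      have hiS : i ∉ S := Finset.mem_compl.mp hi
      obtain ⟨R, hiR, hRcard, hR⟩ := hloc i
      -- extend to a set S' of exact size (k+1)(r+1)
      have hT0 : (insert i (S ∪ R)).card ≤ (k + 1) * (r + 1) := by
        calc (insert i (S ∪ R)).card ≤ (S ∪ R).card + 1 := Finset.card_insert_le _ _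
          _ ≤ S.card + R.card + 1 := by
              have := Finset.card_union_le S R; omega
          _ ≤ (k + 1) * (r + 1) := by rw [hScard, hRcard]; ring_nf; omega
      obtain ⟨S', hS'sub, hS'card⟩ := Finset.exists_superset_card_eq hT0
        (by rw [Fintype.card_fin]; exact hk1)
      have hSS' : S ⊆ S' := fun x hx =>
        hS'sub (Finset.mem_insert_of_mem (Finset.mem_union_left _ hx))
      have hRS' : R ⊆ S' := fun x hx =>
        hS'sub (Finset.mem_insert_of_mem (Finset.mem_union_right _ hx))
      have hiS' : i ∈ S' := hS'sub (Finset.mem_insert_self _ _)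
      set T : Finset (Fin n) := S' \ insert i S with hT
      have hinsS' : insert i S ⊆ S' := Finset.insert_subset hiS' hSS'
      have hTcard : T.card = r := by
        rw [hT, Finset.card_sdiff_of_subset hinsS', hS'card, Finset.card_insert_of_notMem hiS, hScard]
        ring_nf; omega
      have hTS' : T ⊆ S' := Finset.sdiff_subset
      -- extension map from T-words
      set ext : (↥T → Q) → (Fin n → Q) := fun h j => if hj : j ∈ T then h ⟨j, hj⟩ else d0
        with hext
      have hresT : ∀ X : Fin n → Q, resW d0 T X = ext (fun j => X j.val) := by
        intro X; funext j
        by_cases hj : j ∈ T <;> simp [resW, ext, hj]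
      -- key coverage of R
      have hRcov : R ⊆ S ∪ T := by
        intro j hj
        by_cases hjS : j ∈ S
        · exact Finset.mem_union_left _ hjS
        · refine Finset.mem_union_right _ ?_
          rw [hT, Finset.mem_sdiff]
          refine ⟨hRS' hj, ?_⟩
          simp only [Finset.mem_insert]
          rintro (rfl | hjS')
          · exact hiR hj
          · exact hjS hjS'
      refine ⟨S', hS'card, ?_⟩
      -- bound card of projections to S'
      set P := (C.image (resW d0 S)) ×ˢ ((Finset.univ : Finset (↥T → Q)).image ext) with hP
      have hinj : (C.image (resW d0 S')).card ≤ P.card := by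
        apply Finset.card_le_card_of_injOn (fun g => (resW d0 S g, resW d0 T g))
        · intro g hg
          obtain ⟨X, hX, rfl⟩ := Finset.mem_image.mp hg
          beta_reduce
          rw [hP, Finset.mem_coe, Finset.mem_product]
          constructor
          · rw [resW_resW d0 hSS']
            exact Finset.mem_image_of_mem _ hX
          · rw [resW_resW d0 hTS', hresT]
            exact Finset.mem_image_of_mem ext (Finset.mem_univ (fun j => X j.val))
        · intro g hg g' hg' hgg'
          obtain ⟨X, hX, rfl⟩ := Finset.mem_image.mp hg
          obtain ⟨Y, hY, rfl⟩ := Finset.mem_image.mp hg'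
          have h1 : resW d0 S X = resW d0 S Y := by
            have := congrArg Prod.fst hgg'
            simpa [resW_resW d0 hSS'] using this
          have h2 : resW d0 T X = resW d0 T Y := by
            have := congrArg Prod.snd hgg'
            simpa [resW_resW d0 hTS'] using this
          have hagree : ∀ j ∈ S ∪ T, X j = Y j := by
            intro j hj
            rcases Finset.mem_union.mp hj with hj | hj
            · have := congrFun h1 j; simpa [resW, hj] using this
            · have := congrFun h2 j; simpa [resW, hj] using this
          have hXi : X i = Y i := by
            by_contra hne
            obtain ⟨j, hjR, hjne⟩ := hR X hX Y hY hne
            exact hjne (hagree j (hRcov hjR))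
          funext j
          by_cases hj : j ∈ S'
          · simp only [resW, hj, if_true]
            by_cases hjS : j ∈ S
            · exact hagree j (Finset.mem_union_left _ hjS)
            · by_cases hji : j = i
              · rw [hji]; exact hXi
              · refine hagree j (Finset.mem_union_right _ ?_)
                rw [hT, Finset.mem_sdiff]
                exact ⟨hj, by simp [hji, hjS]⟩
          · simp [resW, hj]
      have hPcard : P.card ≤ q ^ (k * r) * q ^ r := by
        rw [hP, Finset.card_product]
        apply Nat.mul_le_mul hSim
        calc ((Finset.univ : Finset (↥T → Q)).image ext).card
            ≤ (Finset.univ : Finset (↥T → Q)).card := Finset.card_image_le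
          _ = q ^ r := by
              rw [Finset.card_univ, Fintype.card_fun, hcard, Fintype.card_coe, hTcard]
      calc (C.image (resW d0 S')).card ≤ q ^ (k * r) * q ^ r := le_trans hinj hPcard
        _ = q ^ ((k + 1) * r) := by rw [← pow_add]; ring_nf
  -- apply with k = t
  obtain ⟨S, hScard, hSim⟩ := key t htn
  set img := C.image (resW d0 S) with himg
  have himgne : img.Nonempty := hC.image _
  obtain ⟨v, hv, hvmax⟩ := Finset.exists_max_image img
    (fun w => (C.filter (fun X => resW d0 S X = w)).card) himgne
  set fib := C.filter (fun X => resW d0 S X = v) with hfib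
  have hfibne : fib.Nonempty := by
    obtain ⟨X, hX, hXv⟩ := Finset.mem_image.mp hv
    exact ⟨X, Finset.mem_filter.mpr ⟨hX, hXv⟩⟩
  -- counting: C.card ≤ img.card * fib.card
  have hcount : C.card ≤ q ^ (t * r) * fib.card := by
    have h1 : C.card = ∑ w ∈ img, (C.filter (fun X => resW d0 S X = w)).card :=
      Finset.card_eq_sum_card_fiberwise (fun X hX => Finset.mem_image_of_mem _ hX)
    have h2 : ∑ w ∈ img, (C.filter (fun X => resW d0 S X = w)).card ≤ img.card * fib.card := by
      rw [← smul_eq_mul]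
      exact Finset.sum_le_card_nsmul _ _ _ (fun w hw => hvmax w hw)
    calc C.card ≤ img.card * fib.card := h1 ▸ h2
      _ ≤ q ^ (t * r) * fib.card := Nat.mul_le_mul_right _ hSim
  -- the punctured code
  have hScompl : Fintype.card ↥(Sᶜ : Finset (Fin n)) = n - t * (r + 1) := by
    rw [Fintype.card_coe, Finset.card_compl, Fintype.card_fin, hScard]
  set e : ↥(Sᶜ : Finset (Fin n)) ≃ Fin (n - t * (r + 1)) :=
    Fintype.equivFinOfCardEq hScompl with he
  set punct : (Fin n → Q) → (Fin (n - t * (r + 1)) → Q) :=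
    fun X j => X (e.symm j).val with hpunct
  -- codewords in the fiber agreeing off S are equal
  have hfibext : ∀ X ∈ fib, ∀ Y ∈ fib, punct X = punct Y → X = Y := by
    intro X hX Y hY hXY
    have hXv := (Finset.mem_filter.mp hX).2
    have hYv := (Finset.mem_filter.mp hY).2
    funext i
    by_cases hiS : i ∈ S
    · have := congrFun (hXv.trans hYv.symm) i
      simpa [resW, hiS] using this
    · have hic : i ∈ (Sᶜ : Finset (Fin n)) := Finset.mem_compl.mpr hiS
      have := congrFun hXY (e ⟨i, hic⟩)
      simpa [hpunct] using this
  refine ⟨fib.image punct, hfibne.image _, ?_, ?_⟩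
  · -- minimum distance
    intro X' hX' Y' hY' hne
    obtain ⟨X, hX, rfl⟩ := Finset.mem_image.mp hX'
    obtain ⟨Y, hY, rfl⟩ := Finset.mem_image.mp hY'
    have hXYne : X ≠ Y := fun h => hne (by rw [h])
    have hXC := (Finset.mem_filter.mp hX).1
    have hYC := (Finset.mem_filter.mp hY).1
    refine le_trans (hdist X hXC Y hYC hXYne) ?_
    -- hammingDist X Y ≤ hammingDist (punct X) (punct Y)
    have hXv := (Finset.mem_filter.mp hX).2
    have hYv := (Finset.mem_filter.mp hY).2
    show (Finset.univ.filter fun i => X i ≠ Y i).card ≤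
      (Finset.univ.filter fun j => punct X j ≠ punct Y j).card
    have hagreeS : ∀ i ∈ S, X i = Y i := by
      intro i hiS
      have := congrFun (hXv.trans hYv.symm) i
      simpa [resW, hiS] using this
    have hmem : ∀ i, X i ≠ Y i → i ∈ (Sᶜ : Finset (Fin n)) := by
      intro i hi
      exact Finset.mem_compl.mpr (fun hiS => hi (hagreeS i hiS))
    obtain ⟨i0, hi0⟩ := Function.ne_iff.mp hXYne
    apply Finset.card_le_card_of_injOn
      (fun i => if h : X i ≠ Y i then e ⟨i, hmem i h⟩ else e ⟨i0, hmem i0 hi0⟩)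
    · intro i hi
      have hi' : X i ≠ Y i := (Finset.mem_filter.mp hi).2
      beta_reduce
      rw [Finset.mem_coe, dif_pos hi']
      refine Finset.mem_filter.mpr ⟨Finset.mem_univ _, ?_⟩
      simpa [hpunct] using hi'
    · intro i hi j hj hij
      have hi' : X i ≠ Y i := (Finset.mem_filter.mp hi).2
      have hj' : X j ≠ Y j := (Finset.mem_filter.mp hj).2
      simp only [dif_pos hi', dif_pos hj'] at hij
      exact congrArg Subtype.val (e.injective hij)
  · -- cardinality
    have hcard' : (fib.image punct).card = fib.card :=
      Finset.card_image_of_injOn (fun X hX Y hY h => hfibext X hX Y hY h)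
    rw [hcard', mul_comm]
    exact hcount
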